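/- arXiv:2503.08465 — 5 statements merged into one kernel-verified Lean document; each statement's English description precedes it below -/
import Mathlib

section
/- Let H be a real inner product space and let X, Y ⊆ H be finite-dimensional subspaces with dim X = dim Y. Define dist(X, Y) = sup over x ∈ X with ‖x‖ = 1 of inf over w ∈ Y of ‖x − w‖. Then dist(X, Y) = dist(Y, X). -/
noncomputable section
namespace Stmt0Aux
open RealInnerProductSpace
open Submodule

variable {H : Type*} [NormedAddCommGroup H] [InnerProductSpace ℝ H]

/-- Norms of orthogonal projections onto `Y` of unit vectors of `X`. -/
def T (X Y : Submodule ℝ H) [FiniteDimensional ℝ Y] : Set ℝ :=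
  {t : ℝ | ∃ x ∈ X, ‖x‖ = 1 ∧ t = ‖(orthogonalProjection Y x : H)‖}

lemma T_nonneg (X Y : Submodule ℝ H) [FiniteDimensional ℝ Y] :
    ∀ t ∈ T X Y, 0 ≤ t := by
  rintro t ⟨x, hx, h1, rfl⟩; exact norm_nonneg _

lemma T_bdd (X Y : Submodule ℝ H) [FiniteDimensional ℝ Y] : BddBelow (T X Y) :=
  ⟨0, fun t ht => T_nonneg X Y t ht⟩

lemma sInf_T_nonneg (X Y : Submodule ℝ H) [FiniteDimensional ℝ Y] :
    0 ≤ sInf (T X Y) :=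
  Real.sInf_nonneg (T_nonneg X Y)

lemma scaling (X Y : Submodule ℝ H) [FiniteDimensional ℝ Y] (x : H) (hx : x ∈ X) :
    sInf (T X Y) * ‖x‖ ≤ ‖(orthogonalProjection Y x : H)‖ := by
  rcases eq_or_ne x 0 with rfl | hne
  · simp
  · have hxn : ‖x‖ ≠ 0 := norm_ne_zero_iff.2 hne
    have hu : (‖x‖⁻¹ • x) ∈ X := X.smul_mem _ hx
    have hu1 : ‖‖x‖⁻¹ • x‖ = 1 := by
      rw [norm_smul, norm_inv, norm_norm, inv_mul_cancel₀ hxn]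
    have hmem : ‖(orthogonalProjection Y (‖x‖⁻¹ • x) : H)‖ ∈ T X Y :=
      ⟨_, hu, hu1, rfl⟩
    have h1 : sInf (T X Y) ≤ ‖(orthogonalProjection Y (‖x‖⁻¹ • x) : H)‖ :=
      csInf_le (T_bdd X Y) hmem
    have h2 : ‖(orthogonalProjection Y (‖x‖⁻¹ • x) : H)‖
        = ‖x‖⁻¹ * ‖(orthogonalProjection Y x : H)‖ := by
      rw [map_smul]
      push_cast
      rw [norm_smul, norm_inv, norm_norm]
    rw [h2] at h1
    have hxpos : (0:ℝ) < ‖x‖ := lt_of_le_of_ne (norm_nonneg x) (Ne.symm hxn)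
    calc sInf (T X Y) * ‖x‖ ≤ (‖x‖⁻¹ * ‖(orthogonalProjection Y x : H)‖) * ‖x‖ := by
          exact mul_le_mul_of_nonneg_right h1 (norm_nonneg x)
      _ = ‖(orthogonalProjection Y x : H)‖ := by field_simp

lemma key (X Y : Submodule ℝ H) [FiniteDimensional ℝ X] [FiniteDimensional ℝ Y]
    (hdim : Module.finrank ℝ X = Module.finrank ℝ Y)
    (y : H) (hy : y ∈ Y) (hy1 : ‖y‖ = 1) :
    sInf (T X Y) ≤ ‖(orthogonalProjection X y : H)‖ := by
  set m := sInf (T X Y) with hm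
  rcases eq_or_lt_of_le (sInf_T_nonneg X Y) with h0 | hpos
  · rw [hm, ← h0]; exact norm_nonneg _
  · -- m > 0 : the projection map X → Y is injective, hence surjective
    set A : X →ₗ[ℝ] Y := (orthogonalProjection Y).toLinearMap ∘ₗ X.subtype with hA
    have hinj : Function.Injective A := by
      rw [← LinearMap.ker_eq_bot, Submodule.eq_bot_iff]
      rintro ⟨x, hx⟩ hker
      have hker' : (orthogonalProjection Y x : H) = 0 := by
        have : A ⟨x, hx⟩ = 0 := hker
        simpa [hA] using congrArg (Subtype.val) this
      have := scaling X Y x hx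
      rw [hker'] at this
      simp only [norm_zero] at this
      have : ‖x‖ ≤ 0 := by nlinarith
      have : x = 0 := norm_le_zero_iff.1 this
      simp [this]
    have hsurj : Function.Surjective A :=
      (LinearMap.injective_iff_surjective_of_finrank_eq_finrank hdim).1 hinj
    obtain ⟨⟨x, hx⟩, hAx⟩ := hsurj ⟨y, hy⟩
    have hPx : (orthogonalProjection Y x : H) = y := by
      simpa [hA] using congrArg (Subtype.val) hAx
    -- ⟪x, y⟫ = ⟪P_Y x, y⟫ = ‖y‖² = 1
    have hxy : ⟪x, y⟫ = 1 := by
      have horth : x - (orthogonalProjection Y x : H) ∈ Yᗮ :=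
        sub_starProjection_mem_orthogonal x
      have h1 : ⟪x - (orthogonalProjection Y x : H), y⟫ = 0 :=
        (Submodule.mem_orthogonal' Y _).1 horth y hy
      have h2 : ⟪(orthogonalProjection Y x : H), y⟫ = ⟪y, y⟫ := by rw [hPx]
      have h3 : ⟪y, y⟫ = 1 := by
        rw [real_inner_self_eq_norm_sq, hy1]; norm_num
      have := inner_sub_left (𝕜 := ℝ) x ((orthogonalProjection Y x : H)) y
      rw [h1, h2, h3] at this
      linarith
    -- ⟪x, y⟫ = ⟪x, P_X y⟫
    have hxy2 : ⟪x, (orthogonalProjection X y : H)⟫ = 1 := by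
      have horth : y - (orthogonalProjection X y : H) ∈ Xᗮ :=
        sub_starProjection_mem_orthogonal y
      have h1 : ⟪x, y - (orthogonalProjection X y : H)⟫ = 0 :=
        (Submodule.mem_orthogonal X _).1 horth x hx
      have := inner_sub_right (𝕜 := ℝ) x y ((orthogonalProjection X y : H))
      rw [h1] at this
      linarith [hxy]
    have hCS : (1:ℝ) ≤ ‖x‖ * ‖(orthogonalProjection X y : H)‖ := by
      calc (1:ℝ) = ⟪x, (orthogonalProjection X y : H)⟫ := hxy2.symm
        _ ≤ ‖x‖ * ‖(orthogonalProjection X y : H)‖ := real_inner_le_norm _ _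
    have hscale : m * ‖x‖ ≤ 1 := by
      have := scaling X Y x hx
      rw [hPx, hy1] at this
      exact this
    nlinarith [norm_nonneg x, norm_nonneg ((orthogonalProjection X y : H))]

lemma sInf_T_symm (X Y : Submodule ℝ H) [FiniteDimensional ℝ X] [FiniteDimensional ℝ Y]
    (hdim : Module.finrank ℝ X = Module.finrank ℝ Y)
    (hXne : ∃ x ∈ X, ‖x‖ = (1:ℝ)) (hYne : ∃ y ∈ Y, ‖y‖ = (1:ℝ)) :
    sInf (T X Y) = sInf (T Y X) := by
  have hTne : (T X Y).Nonempty := by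
    obtain ⟨x, hx, h1⟩ := hXne; exact ⟨_, x, hx, h1, rfl⟩
  have hTne' : (T Y X).Nonempty := by
    obtain ⟨y, hy, h1⟩ := hYne; exact ⟨_, y, hy, h1, rfl⟩
  apply le_antisymm
  · apply le_csInf hTne'
    rintro t ⟨y, hy, h1, rfl⟩
    exact key X Y hdim y hy h1
  · apply le_csInf hTne
    rintro t ⟨x, hx, h1, rfl⟩
    exact key Y X hdim.symm x hx h1

lemma sInf_dist (Y : Submodule ℝ H) [FiniteDimensional ℝ Y] (x : H) :
    sInf {s : ℝ | ∃ w ∈ Y, s = ‖x - w‖} = ‖x - (orthogonalProjection Y x : H)‖ := by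
  rw [show ‖x - (orthogonalProjection Y x : H)‖ = ⨅ w : Y, ‖x - w‖ from starProjection_minimal x, iInf]
  congr 1
  ext s
  constructor
  · rintro ⟨w, hw, rfl⟩; exact ⟨⟨w, hw⟩, rfl⟩
  · rintro ⟨⟨w, hw⟩, rfl⟩; exact ⟨w, hw, rfl⟩

lemma pythagoras (Y : Submodule ℝ H) [FiniteDimensional ℝ Y] (x : H) :
    ‖x‖ ^ 2 = ‖x - (orthogonalProjection Y x : H)‖ ^ 2
      + ‖(orthogonalProjection Y x : H)‖ ^ 2 := by
  have horth : x - (orthogonalProjection Y x : H) ∈ Yᗮ :=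
    sub_starProjection_mem_orthogonal x
  have h0 : ⟪x - (orthogonalProjection Y x : H), (orthogonalProjection Y x : H)⟫ = 0 :=
    (Submodule.mem_orthogonal' Y _).1 horth _ (orthogonalProjection Y x).2
  have := norm_add_sq_real (x - (orthogonalProjection Y x : H))
    ((orthogonalProjection Y x : H))
  rw [h0, sub_add_cancel] at this
  linarith

def g (t : ℝ) : ℝ := Real.sqrt (1 - t * |t|)

lemma g_antitone : Antitone g := by
  intro a b hab
  apply Real.sqrt_le_sqrt
  have : a * |a| ≤ b * |b| := by
    rcases le_or_gt 0 a with ha | ha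
    · have hb : 0 ≤ b := le_trans ha hab
      rw [abs_of_nonneg ha, abs_of_nonneg hb]
      nlinarith
    · rcases le_or_gt 0 b with hb | hb
      · rw [abs_of_neg ha, abs_of_nonneg hb]; nlinarith
      · rw [abs_of_neg ha, abs_of_neg hb]; nlinarith
  linarith

lemma g_continuous : Continuous g :=
  Real.continuous_sqrt.comp (continuous_const.sub (continuous_id.mul continuous_abs))

lemma g_eval (x : H) (hx1 : ‖x‖ = 1) (Y : Submodule ℝ H) [FiniteDimensional ℝ Y] :
    g ‖(orthogonalProjection Y x : H)‖ = ‖x - (orthogonalProjection Y x : H)‖ := by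
  have hp := pythagoras Y x
  rw [hx1] at hp
  have : (1:ℝ) - ‖(orthogonalProjection Y x : H)‖ * |‖(orthogonalProjection Y x : H)‖|
      = ‖x - (orthogonalProjection Y x : H)‖ ^ 2 := by
    rw [abs_of_nonneg (norm_nonneg _)]
    nlinarith
  rw [g, this, Real.sqrt_sq (norm_nonneg _)]

lemma image_eq (X Y : Submodule ℝ H) [FiniteDimensional ℝ Y] :
    {r : ℝ | ∃ x ∈ X, ‖x‖ = 1 ∧ r = sInf {s : ℝ | ∃ w ∈ Y, s = ‖x - w‖}}
      = g '' (T X Y) := by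
  ext r
  constructor
  · rintro ⟨x, hx, h1, rfl⟩
    exact ⟨‖(orthogonalProjection Y x : H)‖, ⟨x, hx, h1, rfl⟩,
      by rw [g_eval x h1 Y, sInf_dist]⟩
  · rintro ⟨t, ⟨x, hx, h1, rfl⟩, rfl⟩
    exact ⟨x, hx, h1, by rw [g_eval x h1 Y, sInf_dist]⟩

end Stmt0Aux

open Stmt0Aux

/-- For finite-dimensional subspaces `X, Y` of a real inner product
space with `dim X = dim Y`, the (one-sided) distance
`dist(X,Y) = sup_{x ∈ X, ‖x‖=1} inf_{w ∈ Y} ‖x - w‖` is symmetric. -/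
theorem stmt_0 {H : Type*} [NormedAddCommGroup H] [InnerProductSpace ℝ H]
    (X Y : Submodule ℝ H) [FiniteDimensional ℝ X] [FiniteDimensional ℝ Y]
    (hdim : Module.finrank ℝ X = Module.finrank ℝ Y) :
    sSup {r : ℝ | ∃ x ∈ X, ‖x‖ = 1 ∧ r = sInf {s : ℝ | ∃ w ∈ Y, s = ‖x - w‖}} =
      sSup {r : ℝ | ∃ y ∈ Y, ‖y‖ = 1 ∧ r = sInf {s : ℝ | ∃ w ∈ X, s = ‖y - w‖}} := by
  rcases eq_or_ne X ⊥ with rfl | hX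
  · have hY : Y = ⊥ := by
      have : Module.finrank ℝ Y = 0 := by
        rw [← hdim]; simp
      exact Submodule.finrank_eq_zero.1 this
    subst hY
    have h1 : {r : ℝ | ∃ x ∈ (⊥ : Submodule ℝ H), ‖x‖ = 1 ∧
        r = sInf {s : ℝ | ∃ w ∈ (⊥ : Submodule ℝ H), s = ‖x - w‖}} = ∅ := by
      ext r
      simp only [Set.mem_setOf_eq, Submodule.mem_bot, Set.mem_empty_iff_false, iff_false]
      rintro ⟨x, rfl, h1, -⟩
      simp at h1
    rw [h1]
  · have hY : Y ≠ ⊥ := by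
      intro h
      apply hX
      apply Submodule.finrank_eq_zero.1
      rw [hdim, h]; simp
    obtain ⟨x₀, hx₀, hx₀0⟩ := Submodule.exists_mem_ne_zero_of_ne_bot hX
    obtain ⟨y₀, hy₀, hy₀0⟩ := Submodule.exists_mem_ne_zero_of_ne_bot hY
    have hXu : ∃ x ∈ X, ‖x‖ = (1:ℝ) :=
      ⟨‖x₀‖⁻¹ • x₀, X.smul_mem _ hx₀, by
        rw [norm_smul, norm_inv, norm_norm, inv_mul_cancel₀ (norm_ne_zero_iff.2 hx₀0)]⟩
    have hYu : ∃ y ∈ Y, ‖y‖ = (1:ℝ) :=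
      ⟨‖y₀‖⁻¹ • y₀, Y.smul_mem _ hy₀, by
        rw [norm_smul, norm_inv, norm_norm, inv_mul_cancel₀ (norm_ne_zero_iff.2 hy₀0)]⟩
    have hTne : (T X Y).Nonempty := by
      obtain ⟨x, hx, h1⟩ := hXu; exact ⟨_, x, hx, h1, rfl⟩
    have hTne' : (T Y X).Nonempty := by
      obtain ⟨y, hy, h1⟩ := hYu; exact ⟨_, y, hy, h1, rfl⟩
    rw [image_eq X Y, image_eq Y X,
      ← Antitone.map_csInf_of_continuousAt (g_continuous.continuousAt) g_antitone hTne
        (T_bdd X Y),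
      ← Antitone.map_csInf_of_continuousAt (g_continuous.continuousAt) g_antitone hTne'
        (T_bdd Y X),
      sInf_T_symm X Y hdim hXu hYu]
end
end

section
/- Let M ∈ ℝ^{n×n} be symmetric positive definite and let A : S → ℝ^{n×n} be spectrally equivalent to a symmetric positive definite matrix Ā with constants 0 < α ≤ β. Fix i ∈ {1,…,n−1} and set δ₀ = (λ_{i+1}(Ā,M) − λ_i(Ā,M))/λ_i(Ā,M). If δ₀ > (β − α)/α, then δ := (α δ₀ + (α − β))/β > 0 and for every σ ∈ S, (λ_{i+1}(A(σ),M) − λ_i(A(σ),M))/λ_i(A(σ),M) ≥ δ. -/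
open Matrix

/-- The `j`-th generalized eigenvalue of the pencil `(A, M)` (1-based, in
nondecreasing order, repeated by multiplicity), via the min-max formula. -/
noncomputable def lamMinMax {n : ℕ} (A M : Matrix (Fin n) (Fin n) ℝ) (j : ℕ) : ℝ :=
  sInf { r : ℝ | ∃ U : Submodule ℝ (Fin n → ℝ), Module.finrank ℝ U = j ∧
    r = sSup { q : ℝ | ∃ x ∈ U, x ≠ 0 ∧ q = (x ⬝ᵥ A.mulVec x) / (x ⬝ᵥ M.mulVec x) } }

section Aux

variable {n : ℕ}

private lemma quad_pos {A : Matrix (Fin n) (Fin n) ℝ} (hA : A.PosDef)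
    {x : Fin n → ℝ} (hx : x ≠ 0) : 0 < x ⬝ᵥ A.mulVec x := by
  simpa using hA.dotProduct_mulVec_pos hx

private lemma quad_cont (A : Matrix (Fin n) (Fin n) ℝ) :
    Continuous fun x : Fin n → ℝ => x ⬝ᵥ A.mulVec x := by
  simp only [dotProduct, mulVec]
  exact continuous_finset_sum _ fun i _ =>
    (continuous_apply i).mul
      (continuous_finset_sum _ fun j _ => (continuous_const.mul (continuous_apply j)))

private lemma quad_smul (A : Matrix (Fin n) (Fin n) ℝ) (t : ℝ) (x : Fin n → ℝ) :
    (t • x) ⬝ᵥ A.mulVec (t • x) = t ^ 2 * (x ⬝ᵥ A.mulVec x) := by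
  rw [Matrix.mulVec_smul, smul_dotProduct, dotProduct_smul, smul_eq_mul, smul_eq_mul]
  ring

/-- Global two-sided bounds on the Rayleigh quotient of a pair of PD matrices. -/
private lemma rayleigh_bounds (hn : 1 ≤ n) {A M : Matrix (Fin n) (Fin n) ℝ}
    (hA : A.PosDef) (hM : M.PosDef) :
    ∃ c C : ℝ, 0 < c ∧ ∀ x : Fin n → ℝ, x ≠ 0 →
      c ≤ (x ⬝ᵥ A.mulVec x) / (x ⬝ᵥ M.mulVec x) ∧
        (x ⬝ᵥ A.mulVec x) / (x ⬝ᵥ M.mulVec x) ≤ C := by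
  have hsphne : (Metric.sphere (0 : Fin n → ℝ) 1).Nonempty := by
    have hx0 : ((Pi.single (⟨0, hn⟩ : Fin n) (1 : ℝ) : Fin n → ℝ)) ≠ 0 := by
      intro h
      have := congrFun h ⟨0, hn⟩
      simp at this
    exact ⟨_, by simpa [Metric.mem_sphere, dist_eq_norm] using norm_smul_inv_norm (𝕜 := ℝ) hx0⟩
  have hne0 : ∀ u ∈ Metric.sphere (0 : Fin n → ℝ) 1, u ≠ 0 := by
    intro u hu
    have h1 : ‖u‖ = 1 := by simpa [dist_eq_norm] using hu
    exact fun h => by simp [h] at h1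
  have hcont : ContinuousOn
      (fun x : Fin n → ℝ => (x ⬝ᵥ A.mulVec x) / (x ⬝ᵥ M.mulVec x))
      (Metric.sphere (0 : Fin n → ℝ) 1) :=
    ((quad_cont A).continuousOn).div ((quad_cont M).continuousOn)
      fun u hu => ne_of_gt (quad_pos hM (hne0 u hu))
  obtain ⟨umin, humin, hmin⟩ :=
    (isCompact_sphere (0 : Fin n → ℝ) 1).exists_isMinOn hsphne hcont
  obtain ⟨umax, humax, hmax⟩ :=
    (isCompact_sphere (0 : Fin n → ℝ) 1).exists_isMaxOn hsphne hcont
  refine ⟨(umin ⬝ᵥ A.mulVec umin) / (umin ⬝ᵥ M.mulVec umin),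
    (umax ⬝ᵥ A.mulVec umax) / (umax ⬝ᵥ M.mulVec umax),
    div_pos (quad_pos hA (hne0 _ humin)) (quad_pos hM (hne0 _ humin)), ?_⟩
  intro x hx
  have hnx : ‖x‖ ≠ 0 := norm_ne_zero_iff.mpr hx
  have husph : ‖x‖⁻¹ • x ∈ Metric.sphere (0 : Fin n → ℝ) 1 := by
    simpa [Metric.mem_sphere, dist_eq_norm] using norm_smul_inv_norm (𝕜 := ℝ) hx
  have h1 : x ⬝ᵥ A.mulVec x = ‖x‖ ^ 2 * ((‖x‖⁻¹ • x) ⬝ᵥ A.mulVec (‖x‖⁻¹ • x)) := by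
    rw [quad_smul]; field_simp
  have h2 : x ⬝ᵥ M.mulVec x = ‖x‖ ^ 2 * ((‖x‖⁻¹ • x) ⬝ᵥ M.mulVec (‖x‖⁻¹ • x)) := by
    rw [quad_smul]; field_simp
  have hrx : (x ⬝ᵥ A.mulVec x) / (x ⬝ᵥ M.mulVec x) =
      ((‖x‖⁻¹ • x) ⬝ᵥ A.mulVec (‖x‖⁻¹ • x)) / ((‖x‖⁻¹ • x) ⬝ᵥ M.mulVec (‖x‖⁻¹ • x)) := by
    rw [h1, h2, mul_div_mul_left _ _ (pow_ne_zero 2 hnx)]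
  constructor
  · rw [hrx]; exact hmin husph
  · rw [hrx]; exact hmax husph

private lemma exists_subspace (j : ℕ) (hj : j ≤ n) :
    ∃ U : Submodule ℝ (Fin n → ℝ), Module.finrank ℝ U = j := by
  have hli : LinearIndependent ℝ ((⇑(Pi.basisFun ℝ (Fin n))) ∘ (Fin.castLE hj)) :=
    (Pi.basisFun ℝ (Fin n)).linearIndependent.comp _ (Fin.castLE_injective hj)
  exact ⟨Submodule.span ℝ (Set.range _),
    by rw [finrank_span_eq_card hli, Fintype.card_fin]⟩

private lemma inner_nonempty {U : Submodule ℝ (Fin n → ℝ)} {j : ℕ} (hj1 : 1 ≤ j)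
    (hU : Module.finrank ℝ U = j) : ∃ x ∈ U, x ≠ 0 := by
  have : U ≠ ⊥ := by
    intro h
    rw [h, finrank_bot] at hU
    omega
  exact (Submodule.ne_bot_iff U).mp this

private lemma lam_ge {A M : Matrix (Fin n) (Fin n) ℝ} {c C : ℝ}
    (hbd : ∀ x : Fin n → ℝ, x ≠ 0 →
      c ≤ (x ⬝ᵥ A.mulVec x) / (x ⬝ᵥ M.mulVec x) ∧
        (x ⬝ᵥ A.mulVec x) / (x ⬝ᵥ M.mulVec x) ≤ C)
    {j : ℕ} (hj1 : 1 ≤ j) (hjn : j ≤ n) : c ≤ lamMinMax A M j := by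
  refine le_csInf ?_ ?_
  · obtain ⟨U, hU⟩ := exists_subspace j hjn
    exact ⟨_, U, hU, rfl⟩
  · rintro r ⟨U, hU, rfl⟩
    obtain ⟨x, hxU, hx⟩ := inner_nonempty hj1 hU
    refine le_trans (hbd x hx).1 (le_csSup ⟨C, ?_⟩ ⟨x, hxU, hx, rfl⟩)
    rintro q ⟨y, hyU, hy, rfl⟩
    exact (hbd y hy).2

private lemma lam_pos {A M : Matrix (Fin n) (Fin n) ℝ} (hA : A.PosDef) (hM : M.PosDef)
    {j : ℕ} (hj1 : 1 ≤ j) (hjn : j ≤ n) : 0 < lamMinMax A M j := by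
  obtain ⟨c, C, hc, hbd⟩ := rayleigh_bounds (le_trans hj1 hjn) hA hM
  exact lt_of_lt_of_le hc (lam_ge hbd hj1 hjn)

private lemma lam_le {A₁ A₂ M : Matrix (Fin n) (Fin n) ℝ} (h₁ : A₁.PosDef) (h₂ : A₂.PosDef)
    (hM : M.PosDef) {γ : ℝ} (hγ : 0 < γ)
    (h : ∀ v : Fin n → ℝ, v ⬝ᵥ A₁.mulVec v ≤ γ * (v ⬝ᵥ A₂.mulVec v))
    {j : ℕ} (hj1 : 1 ≤ j) (hjn : j ≤ n) :
    lamMinMax A₁ M j ≤ γ * lamMinMax A₂ M j := by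
  have hn : 1 ≤ n := le_trans hj1 hjn
  obtain ⟨c₁, C₁, hc₁, hbd₁⟩ := rayleigh_bounds hn h₁ hM
  obtain ⟨c₂, C₂, hc₂, hbd₂⟩ := rayleigh_bounds hn h₂ hM
  rw [← div_le_iff₀' hγ]
  refine le_csInf ?_ ?_
  · obtain ⟨U, hU⟩ := exists_subspace j hjn
    exact ⟨_, U, hU, rfl⟩
  · rintro r ⟨U, hU, rfl⟩
    rw [div_le_iff₀' hγ]
    have hBdd₂ : BddAbove {q : ℝ | ∃ x ∈ U, x ≠ 0 ∧
        q = (x ⬝ᵥ A₂.mulVec x) / (x ⬝ᵥ M.mulVec x)} :=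
      ⟨C₂, by rintro q ⟨y, hyU, hy, rfl⟩; exact (hbd₂ y hy).2⟩
    obtain ⟨x₀, hx₀U, hx₀⟩ := inner_nonempty hj1 hU
    have step1 : lamMinMax A₁ M j ≤ sSup {q : ℝ | ∃ x ∈ U, x ≠ 0 ∧
        q = (x ⬝ᵥ A₁.mulVec x) / (x ⬝ᵥ M.mulVec x)} := by
      refine csInf_le ⟨c₁, ?_⟩ ⟨U, hU, rfl⟩
      rintro r ⟨V, hV, rfl⟩
      obtain ⟨y, hyV, hy⟩ := inner_nonempty hj1 hV
      refine le_trans (hbd₁ y hy).1 (le_csSup ⟨C₁, ?_⟩ ⟨y, hyV, hy, rfl⟩)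
      rintro q ⟨z, hzV, hz, rfl⟩
      exact (hbd₁ z hz).2
    have step2 : sSup {q : ℝ | ∃ x ∈ U, x ≠ 0 ∧
          q = (x ⬝ᵥ A₁.mulVec x) / (x ⬝ᵥ M.mulVec x)} ≤
        γ * sSup {q : ℝ | ∃ x ∈ U, x ≠ 0 ∧
          q = (x ⬝ᵥ A₂.mulVec x) / (x ⬝ᵥ M.mulVec x)} := by
      refine csSup_le ⟨_, x₀, hx₀U, hx₀, rfl⟩ ?_
      rintro q ⟨x, hxU, hx, rfl⟩
      have hgx : 0 < x ⬝ᵥ M.mulVec x := quad_pos hM hx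
      have h1 : (x ⬝ᵥ A₁.mulVec x) / (x ⬝ᵥ M.mulVec x) ≤
          γ * ((x ⬝ᵥ A₂.mulVec x) / (x ⬝ᵥ M.mulVec x)) := by
        rw [mul_div_assoc']
        exact div_le_div_of_nonneg_right (h x) hgx.le
      exact le_trans h1 (mul_le_mul_of_nonneg_left
        (le_csSup hBdd₂ ⟨x, hxU, hx, rfl⟩) hγ.le)
    exact le_trans step1 step2

end Aux

/-- gap stability.  With `δ₀ = (λ_{i+1}(Ā,M) - λ_i(Ā,M))/λ_i(Ā,M)`,
if `δ₀ > (β - α)/α` then `δ = (α δ₀ + (α - β))/β > 0` and for all `σ ∈ S`,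
`(λ_{i+1}(A(σ),M) - λ_i(A(σ),M))/λ_i(A(σ),M) ≥ δ`. -/
theorem stmt_6 {n d : ℕ} (S : Set (Fin d → ℝ)) (M Abar : Matrix (Fin n) (Fin n) ℝ)
    (hM : M.PosDef) (hAbar : Abar.PosDef)
    (A : (Fin d → ℝ) → Matrix (Fin n) (Fin n) ℝ) (hApd : ∀ σ ∈ S, (A σ).PosDef)
    (α β : ℝ) (hα : 0 < α) (hαβ : α ≤ β)
    (hspec : ∀ σ ∈ S, ∀ v : Fin n → ℝ,
      α * (v ⬝ᵥ Abar.mulVec v) ≤ v ⬝ᵥ (A σ).mulVec v ∧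
        v ⬝ᵥ (A σ).mulVec v ≤ β * (v ⬝ᵥ Abar.mulVec v))
    (i : ℕ) (hi1 : 1 ≤ i) (hin : i + 1 ≤ n)
    (δ₀ : ℝ)
    (hδ₀def : δ₀ = (lamMinMax Abar M (i + 1) - lamMinMax Abar M i) / lamMinMax Abar M i)
    (hδ₀ : δ₀ > (β - α) / α) :
    (α * δ₀ + (α - β)) / β > 0 ∧
      ∀ σ ∈ S,
        (lamMinMax (A σ) M (i + 1) - lamMinMax (A σ) M i) / lamMinMax (A σ) M i ≥
          (α * δ₀ + (α - β)) / β := by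
  have hβ : 0 < β := lt_of_lt_of_le hα hαβ
  have hi : i ≤ n := by omega
  have hi11 : 1 ≤ i + 1 := by omega
  have hδ₀pos : 0 < δ₀ :=
    lt_of_le_of_lt (div_nonneg (by linarith) hα.le) hδ₀
  have hnum : 0 < α * δ₀ + (α - β) := by
    have h1 : β - α < δ₀ * α := (div_lt_iff₀ hα).mp hδ₀
    nlinarith
  refine ⟨div_pos hnum hβ, ?_⟩
  intro σ hσ
  set a := lamMinMax Abar M i with ha_def
  set b := lamMinMax Abar M (i + 1) with hb_def
  set aσ := lamMinMax (A σ) M i with haσ_def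
  set bσ := lamMinMax (A σ) M (i + 1) with hbσ_def
  have ha : 0 < a := lam_pos hAbar hM hi1 hi
  have haσ : 0 < aσ := lam_pos (hApd σ hσ) hM hi1 hi
  have hub : aσ ≤ β * a :=
    lam_le (hApd σ hσ) hAbar hM hβ (fun v => (hspec σ hσ v).2) hi1 hi
  have hlb' : b ≤ α⁻¹ * bσ := by
    refine lam_le hAbar (hApd σ hσ) hM (inv_pos.mpr hα) (fun v => ?_) hi11 hin
    rw [inv_mul_eq_div, le_div_iff₀ hα]
    have := (hspec σ hσ v).1
    linarith
  have hlb : α * b ≤ bσ := by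
    rw [inv_mul_eq_div, le_div_iff₀ hα] at hlb'
    linarith
  have hda : δ₀ * a = b - a := by
    rw [hδ₀def]
    field_simp
  have hb2 : α * β * b = α * β * (δ₀ * a) + α * β * a := by
    rw [hda]; ring
  have P1 : 0 ≤ (α * (δ₀ + 1)) * (β * a - aσ) :=
    mul_nonneg (mul_nonneg hα.le (by linarith)) (sub_nonneg.mpr hub)
  have P2 : 0 ≤ β * (bσ - α * b) := mul_nonneg hβ.le (sub_nonneg.mpr hlb)
  rw [ge_iff_le, div_le_div_iff₀ hβ haσ]
  nlinarith [P1, P2, hb2]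
end

section
/- Assume A : S → ℝ^{n×n} is spectrally equivalent to Ā with constants 0 < α ≤ β, and assume ρ > 1 and αρ > 1. Then for every σ ∈ S and every t ∈ (0, Λ), the matrix W_⊥ᵀ(A(σ) − tM)W_⊥ is symmetric positive definite; indeed every nonzero w ∈ Ē⊥ satisfies wᵀ A(σ) w − t wᵀ M w ≥ (αρΛ − t)‖w‖_M² > 0. -/
open Matrix
open scoped MatrixOrder

/-- `Ē`, the span of all eigenvectors `v` of the pencil `(Ā, M)` (`Āv = ξMv`)
with eigenvalue `ξ ∈ (0, c)`. -/
noncomputable def Ebar {n : ℕ} (Abar M : Matrix (Fin n) (Fin n) ℝ) (c : ℝ) :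
    Submodule ℝ (Fin n → ℝ) :=
  Submodule.span ℝ {v : Fin n → ℝ |
    v ≠ 0 ∧ ∃ ξ : ℝ, 0 < ξ ∧ ξ < c ∧ Abar.mulVec v = ξ • M.mulVec v}

private lemma dot_sym {n : ℕ} {P : Matrix (Fin n) (Fin n) ℝ} (hP : Pᵀ = P)
    (a b : Fin n → ℝ) : a ⬝ᵥ P *ᵥ b = (P *ᵥ a) ⬝ᵥ b := by
  rw [dotProduct_mulVec, ← mulVec_transpose, hP]

/-- Key spectral lemma: if `w` is `Ā`-orthogonal to `Ebar Abar M c`, then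
`c * wᵀMw ≤ wᵀĀw`. -/
private lemma key_lemma {n : ℕ} (M Abar : Matrix (Fin n) (Fin n) ℝ)
    (hM : M.PosDef) (hAbar : Abar.PosDef) (c : ℝ) (hc : 0 < c)
    (w : Fin n → ℝ) (hw : ∀ u ∈ Ebar Abar M c, w ⬝ᵥ Abar.mulVec u = 0) :
    c * (w ⬝ᵥ M.mulVec w) ≤ w ⬝ᵥ Abar.mulVec w := by
  set L := CFC.sqrt M with hLdef
  have hLL : L * L = M := CFC.sqrt_mul_sqrt_self M hM.posSemidef.nonneg
  have hLsym : Lᵀ = L := by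
    rw [← conjTranspose_eq_transpose_of_trivial]; exact (CFC.sqrt_nonneg M).posSemidef.1
  have hdetL : IsUnit L.det := by
    have h2 : L.det * L.det = M.det := by rw [← det_mul, hLL]
    have := hM.det_pos
    refine isUnit_iff_ne_zero.2 fun h => ?_
    rw [h, mul_zero] at h2; linarith [h2 ▸ this]
  have hLiL : L⁻¹ * L = 1 := nonsing_inv_mul L hdetL
  have hLLi : L * L⁻¹ = 1 := mul_nonsing_inv L hdetL
  have hLisym : (L⁻¹)ᵀ = L⁻¹ := by rw [transpose_nonsing_inv, hLsym]
  have hAsym : Abarᵀ = Abar := by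
    rw [← conjTranspose_eq_transpose_of_trivial]; exact hAbar.1
  set B := L⁻¹ * Abar * L⁻¹ with hBdef
  have hBsym : Bᵀ = B := by
    rw [hBdef, transpose_mul, transpose_mul, hLisym, hAsym, Matrix.mul_assoc]
  have hBh : B.IsHermitian := by
    rw [IsHermitian, conjTranspose_eq_transpose_of_trivial]; exact hBsym
  have hABL : Abar = L * B * L := by
    rw [hBdef]
    calc Abar = (L * L⁻¹) * Abar * (L⁻¹ * L) := by rw [hLLi, hLiL, Matrix.one_mul, Matrix.mul_one]
    _ = L * (L⁻¹ * Abar * L⁻¹) * L := by noncomm_ring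
  have hBpd : B.PosDef := by
    refine PosDef.of_dotProduct_mulVec_pos hBh fun x hx => ?_
    have hx' : L⁻¹ *ᵥ x ≠ 0 := by
      intro h
      apply hx
      have : L *ᵥ (L⁻¹ *ᵥ x) = x := by rw [mulVec_mulVec, hLLi, one_mulVec]
      rw [h, mulVec_zero] at this; exact this.symm
    have := hAbar.dotProduct_mulVec_pos hx'
    simp only [star_trivial, RCLike.re_to_real] at this ⊢
    calc (0:ℝ) < (L⁻¹ *ᵥ x) ⬝ᵥ Abar *ᵥ (L⁻¹ *ᵥ x) := this
    _ = x ⬝ᵥ B *ᵥ x := by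
        rw [hBdef, ← mulVec_mulVec, ← mulVec_mulVec, dot_sym hLisym]
  set U := (hBh.eigenvectorUnitary : Matrix (Fin n) (Fin n) ℝ) with hUdef
  set μ := hBh.eigenvalues with hμdef
  have hUspec : B = U * diagonal μ * Uᵀ := by
    have h := hBh.spectral_theorem
    rw [Unitary.conjStarAlgAut_apply] at h
    rw [star_eq_conjTranspose, conjTranspose_eq_transpose_of_trivial] at h
    rw [RCLike.ofReal_real_eq_id, Function.id_comp] at h
    exact h
  have hUU : U * Uᵀ = 1 := by
    rw [← conjTranspose_eq_transpose_of_trivial, ← star_eq_conjTranspose]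
    exact Unitary.mul_star_self_of_mem hBh.eigenvectorUnitary.2
  have hμpos : ∀ i, 0 < μ i := fun i => hBpd.eigenvalues_pos i
  set x := L *ᵥ w with hxdef
  set y := Uᵀ *ᵥ x with hydef
  -- orthogonality: eigenvectors with small eigenvalue kill y
  have hyi : ∀ i, μ i < c → y i = 0 := by
    intro i hi
    set e : Fin n → ℝ := ⇑(hBh.eigenvectorBasis i) with hedef
    have hBe : B *ᵥ e = μ i • e := hBh.mulVec_eigenvectorBasis i
    have he0 : e ≠ 0 := by
      intro h
      apply hBh.eigenvectorBasis.orthonormal.ne_zero i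
      ext j; exact congrFun h j
    set v : Fin n → ℝ := L⁻¹ *ᵥ e with hvdef
    have hLv : L *ᵥ v = e := by rw [hvdef, mulVec_mulVec, hLLi, one_mulVec]
    have hv0 : v ≠ 0 := by
      intro h; apply he0; rw [← hLv, h, mulVec_zero]
    have hMv : M *ᵥ v = L *ᵥ e := by
      rw [← hLL, ← mulVec_mulVec, hLv]
    have hAv : Abar *ᵥ v = μ i • M *ᵥ v := by
      rw [hABL, ← mulVec_mulVec, ← mulVec_mulVec, hLv, hBe, mulVec_smul, hMv]
    have hvmem : v ∈ Ebar Abar M c :=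
      Submodule.subset_span ⟨hv0, μ i, hμpos i, hi, hAv⟩
    have h0 := hw v hvmem
    rw [hAv, hMv, dotProduct_smul, smul_eq_mul] at h0
    have hwLe : w ⬝ᵥ L *ᵥ e = 0 := by
      rcases mul_eq_zero.1 h0 with h | h
      · exact absurd h (ne_of_gt (hμpos i))
      · exact h
    -- y i = e ⬝ᵥ x = x ⬝ᵥ e = (L *ᵥ w) ⬝ᵥ e = w ⬝ᵥ L *ᵥ e
    have : y i = e ⬝ᵥ x := by
      simp only [hydef, mulVec, dotProduct, transpose_apply]
      refine Finset.sum_congr rfl fun j _ => ?_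
      rw [hUdef, Matrix.IsHermitian.eigenvectorUnitary_apply]
    rw [this, dotProduct_comm, hxdef, ← dot_sym hLsym, hwLe]
  -- quadratic forms in terms of y
  have hAval : w ⬝ᵥ Abar *ᵥ w = y ⬝ᵥ (diagonal μ) *ᵥ y := by
    rw [hABL, ← mulVec_mulVec, ← mulVec_mulVec, dot_sym hLsym, ← hxdef, hUspec,
      ← mulVec_mulVec, ← mulVec_mulVec, dotProduct_mulVec, ← mulVec_transpose, ← hydef]
  have hMval : w ⬝ᵥ M *ᵥ w = y ⬝ᵥ y := by
    have h1 : w ⬝ᵥ M *ᵥ w = x ⬝ᵥ x := by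
      rw [← hLL, ← mulVec_mulVec, dot_sym hLsym, ← hxdef]
    have h2 : y ⬝ᵥ y = x ⬝ᵥ x := by
      rw [hydef, dotProduct_mulVec, ← mulVec_transpose, transpose_transpose,
        mulVec_mulVec, hUU, one_mulVec]
    rw [h1, h2]
  rw [hAval, hMval]
  simp only [dotProduct, mulVec_diagonal, Finset.mul_sum]
  apply Finset.sum_le_sum
  intro i _
  rcases lt_or_ge (μ i) c with h | h
  · rw [hyi i h]; simp
  · nlinarith [sq_nonneg (y i)]

/-- for `σ ∈ S` and `t ∈ (0,Λ)`, the matrix `W⊥ᵀ(A(σ) - tM)W⊥` is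
symmetric positive definite; indeed every nonzero `w ∈ Ē⊥` satisfies
`wᵀA(σ)w - t wᵀMw ≥ (αρΛ - t)‖w‖_M² > 0`. -/
theorem stmt_7 {n m d : ℕ} (S : Set (Fin d → ℝ)) (M Abar : Matrix (Fin n) (Fin n) ℝ)
    (hM : M.PosDef) (hAbar : Abar.PosDef)
    (A : (Fin d → ℝ) → Matrix (Fin n) (Fin n) ℝ) (hApd : ∀ σ ∈ S, (A σ).PosDef)
    (α β Λ ρ : ℝ) (hα : 0 < α) (hαβ : α ≤ β) (hΛ : 0 < Λ) (hρ : 1 < ρ) (hαρ : 1 < α * ρ)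
    (hspec : ∀ σ ∈ S, ∀ v : Fin n → ℝ,
      α * (v ⬝ᵥ Abar.mulVec v) ≤ v ⬝ᵥ (A σ).mulVec v ∧
        v ⬝ᵥ (A σ).mulVec v ≤ β * (v ⬝ᵥ Abar.mulVec v))
    (Wperp : Matrix (Fin n) (Fin m) ℝ)
    -- the columns of `W⊥` lie in `Ē⊥` (the `Ā`-orthocomplement of `Ē`):
    (hWmem : ∀ j, ∀ w ∈ Ebar Abar M (ρ * Λ), (fun i => Wperp i j) ⬝ᵥ Abar.mulVec w = 0)
    -- the columns of `W⊥` span `Ē⊥`: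
    (hWspan : ∀ v : Fin n → ℝ,
      (∀ w ∈ Ebar Abar M (ρ * Λ), v ⬝ᵥ Abar.mulVec w = 0) → ∃ c, v = Wperp.mulVec c)
    -- the columns of `W⊥` are linearly independent:
    (hWli : ∀ c : Fin m → ℝ, Wperp.mulVec c = 0 → c = 0)
    (σ : Fin d → ℝ) (hσ : σ ∈ S) (t : ℝ) (ht : t ∈ Set.Ioo 0 Λ) :
    (Wperpᵀ * (A σ - t • M) * Wperp).PosDef ∧
      ∀ w : Fin n → ℝ, (∀ u ∈ Ebar Abar M (ρ * Λ), w ⬝ᵥ Abar.mulVec u = 0) → w ≠ 0 →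
        (α * ρ * Λ - t) * (w ⬝ᵥ M.mulVec w) ≤
            w ⬝ᵥ (A σ).mulVec w - t * (w ⬝ᵥ M.mulVec w) ∧
          0 < (α * ρ * Λ - t) * (w ⬝ᵥ M.mulVec w) := by
  have htΛ := ht.2
  have ht0 := ht.1
  have part2 : ∀ w : Fin n → ℝ, (∀ u ∈ Ebar Abar M (ρ * Λ), w ⬝ᵥ Abar.mulVec u = 0) → w ≠ 0 →
      (α * ρ * Λ - t) * (w ⬝ᵥ M.mulVec w) ≤
          w ⬝ᵥ (A σ).mulVec w - t * (w ⬝ᵥ M.mulVec w) ∧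
        0 < (α * ρ * Λ - t) * (w ⬝ᵥ M.mulVec w) := by
    intro w hw hw0
    have hMw : 0 < w ⬝ᵥ M *ᵥ w := by simpa using hM.dotProduct_mulVec_pos hw0
    have hkey : (ρ * Λ) * (w ⬝ᵥ M *ᵥ w) ≤ w ⬝ᵥ Abar *ᵥ w :=
      key_lemma M Abar hM hAbar (ρ * Λ) (by positivity) w hw
    have hs := (hspec σ hσ w).1
    have h1 := mul_le_mul_of_nonneg_left hkey hα.le
    have hden : 0 < α * ρ * Λ - t := by nlinarith
    constructor
    · linarith
    · exact mul_pos hden hMw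
  refine ⟨?_, part2⟩
  have hCh : (A σ - t • M).IsHermitian := by
    refine ((hApd σ hσ).1).sub ?_
    rw [IsHermitian, conjTranspose_smul, hM.1]
    simp
  refine PosDef.of_dotProduct_mulVec_pos ?_ ?_
  · rw [← conjTranspose_eq_transpose_of_trivial]
    exact isHermitian_conjTranspose_mul_mul Wperp hCh
  · intro c hc
    have hw0 : Wperp *ᵥ c ≠ 0 := fun h => hc (hWli c h)
    set w := Wperp *ᵥ c with hwdef
    have hperp : ∀ u ∈ Ebar Abar M (ρ * Λ), w ⬝ᵥ Abar.mulVec u = 0 := by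
      intro u hu
      rw [hwdef, dotProduct_comm, dotProduct_mulVec]
      have : (Abar *ᵥ u) ᵥ* Wperp = 0 := by
        ext j
        have := hWmem j u hu
        rw [dotProduct_comm] at this
        simpa [vecMul, dotProduct, mul_comm] using this
      rw [this, zero_dotProduct]
    obtain ⟨h1, h2⟩ := part2 w hperp hw0
    have heq : c ⬝ᵥ (Wperpᵀ * (A σ - t • M) * Wperp) *ᵥ c =
        w ⬝ᵥ (A σ) *ᵥ w - t * (w ⬝ᵥ M *ᵥ w) := by
      rw [← mulVec_mulVec, ← mulVec_mulVec, dotProduct_mulVec, vecMul_transpose, ← hwdef,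
        sub_mulVec, smul_mulVec, dotProduct_sub, dotProduct_smul, smul_eq_mul]
    simp only [star_trivial, RCLike.re_to_real]
    rw [heq]
    linarith
end

section
/- Assume A : S → ℝ^{n×n} is spectrally equivalent to Ā with constants 0 < α ≤ β, ρ > 1 and αρ > 1. Let (σ, t) ∈ S × (0, Λ), let W be a matrix whose columns form a basis of Ē, set K(σ,t) = A(σ) − tM, and let b ∈ ℝⁿ. If (r, η) solves the saddle-point system K(σ,t) r + Ā W η = δA(σ) b and Wᵀ Ā r = 0, then r = Z(σ, t) b. -/
open Matrix

lemma herm_dot {n : ℕ} {A : Matrix (Fin n) (Fin n) ℝ} (hA : A.IsHermitian)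
    (x y : Fin n → ℝ) : x ⬝ᵥ A *ᵥ y = (A *ᵥ x) ⬝ᵥ y := by
  rw [dotProduct_mulVec, ← mulVec_transpose, show Aᵀ = A from hA]

lemma sum_dotProduct' {n k : ℕ} (f : Fin k → (Fin n → ℝ)) (y : Fin n → ℝ) :
    (∑ i, f i) ⬝ᵥ y = ∑ i, f i ⬝ᵥ y := by
  simp only [dotProduct, Finset.sum_apply, Finset.sum_mul]
  rw [Finset.sum_comm]

open scoped MatrixOrder in
lemma key_spectral {n : ℕ} (M Abar : Matrix (Fin n) (Fin n) ℝ)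
    (hM : M.PosDef) (hAbar : Abar.PosDef) (c : ℝ) (v : Fin n → ℝ)
    (hv : ∀ w ∈ Ebar Abar M c, v ⬝ᵥ Abar.mulVec w = 0) :
    c * (v ⬝ᵥ M.mulVec v) ≤ v ⬝ᵥ Abar.mulVec v := by
  classical
  set N := CFC.sqrt M with hNdef
  have hNH : N.IsHermitian := (CFC.sqrt_nonneg M).posSemidef.1
  have hNN : N * N = M := CFC.sqrt_mul_sqrt_self M hM.posSemidef.nonneg
  have hNunit : IsUnit N.det := by
    have : N.det * N.det = M.det := by rw [← det_mul, hNN]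
    have hMd := hM.det_pos
    have hne : N.det ≠ 0 := by
      intro h; rw [h, mul_zero] at this; exact hMd.ne (by rw [this])
    exact hne.isUnit
  have hNiN : N⁻¹ * N = 1 := nonsing_inv_mul N hNunit
  have hNNi : N * N⁻¹ = 1 := mul_nonsing_inv N hNunit
  have hNiH : N⁻¹.IsHermitian := hNH.inv
  set B := N⁻¹ * Abar * N⁻¹ with hBdef
  have hBH : B.IsHermitian := by
    have : B = (N⁻¹)ᴴ * Abar * N⁻¹ := by rw [hNiH.eq]
    rw [this]; exact isHermitian_conjTranspose_mul_mul _ hAbar.1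
  -- cancel N and N⁻¹ on vectors
  have hcancel1 : ∀ x : Fin n → ℝ, N *ᵥ (N⁻¹ *ᵥ x) = x := by
    intro x; rw [mulVec_mulVec, hNNi, one_mulVec]
  have hcancel2 : ∀ x : Fin n → ℝ, N⁻¹ *ᵥ (N *ᵥ x) = x := by
    intro x; rw [mulVec_mulVec, hNiN, one_mulVec]
  have hBpd : B.PosDef := by
    refine Matrix.PosDef.of_dotProduct_mulVec_pos hBH fun x hx => ?_
    have hx' : N⁻¹ *ᵥ x ≠ 0 := by
      intro h
      exact hx (by rw [← hcancel1 x, h, mulVec_zero])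
    have := hAbar.dotProduct_mulVec_pos hx'
    simp only [star_trivial] at this ⊢
    calc (0:ℝ) < (N⁻¹ *ᵥ x) ⬝ᵥ Abar *ᵥ (N⁻¹ *ᵥ x) := this
      _ = x ⬝ᵥ B *ᵥ x := by
          rw [hBdef, ← mulVec_mulVec, ← mulVec_mulVec, herm_dot hNiH]
  set u : Fin n → (Fin n → ℝ) := fun i => ⇑(hBH.eigenvectorBasis i) with hu
  set μ : Fin n → ℝ := fun i => hBH.eigenvalues i with hμ
  have hμpos : ∀ i, 0 < μ i := fun i => hBpd.eigenvalues_pos i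
  have hBu : ∀ i, B *ᵥ u i = μ i • u i := fun i => hBH.mulVec_eigenvectorBasis i
  set w : Fin n → ℝ := N *ᵥ v with hw
  set co : Fin n → ℝ := fun i => u i ⬝ᵥ w with hco
  -- decomposition of w
  have hdecomp : w = ∑ i, co i • u i := by
    have h1 := (hBH.eigenvectorBasis).sum_repr'
      ((WithLp.equiv 2 (Fin n → ℝ)).symm w)
    have h2 := congrArg (WithLp.linearEquiv 2 ℝ (Fin n → ℝ)) h1
    rw [map_sum] at h2
    simp only [_root_.map_smul] at h2
    calc w = (WithLp.linearEquiv 2 ℝ (Fin n → ℝ)) ((WithLp.equiv 2 (Fin n → ℝ)).symm w) := rfl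
      _ = ∑ x, inner (𝕜 := ℝ) (hBH.eigenvectorBasis x) ((WithLp.equiv 2 (Fin n → ℝ)).symm w) •
            (WithLp.linearEquiv 2 ℝ (Fin n → ℝ)) (hBH.eigenvectorBasis x) := h2.symm
      _ = ∑ i, co i • u i := by
          refine Finset.sum_congr rfl fun i _ => ?_
          congr 1
          rw [EuclideanSpace.inner_eq_star_dotProduct, star_trivial, dotProduct_comm]; rfl
  have hworth : ∀ x : Fin n → ℝ, v ⬝ᵥ N *ᵥ x = w ⬝ᵥ x := by
    intro x; rw [herm_dot hNH, hw]
  have hMv : v ⬝ᵥ M *ᵥ v = ∑ i, co i * co i := by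
    have h1 : M *ᵥ v = N *ᵥ w := by rw [hw, mulVec_mulVec, hNN]
    rw [h1, hworth]
    rw [congrArg (· ⬝ᵥ w) hdecomp]
    rw [sum_dotProduct' (fun i => co i • u i)]
    refine Finset.sum_congr rfl fun i _ => ?_
    rw [smul_dotProduct, smul_eq_mul]
  have hNBNw : ∀ x, Abar *ᵥ (N⁻¹ *ᵥ x) = N *ᵥ (B *ᵥ x) := by
    intro x
    rw [hBdef, ← mulVec_mulVec, ← mulVec_mulVec, hcancel1]
  have hAbarv : ∀ x, Abar *ᵥ x = N *ᵥ (B *ᵥ (N *ᵥ x)) := by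
    intro x
    have := hNBNw (N *ᵥ x)
    rwa [hcancel2] at this
  have hAv : v ⬝ᵥ Abar *ᵥ v = ∑ i, μ i * (co i * co i) := by
    rw [hAbarv v, hworth]
    rw [congrArg (· ⬝ᵥ (B *ᵥ (N *ᵥ v))) hdecomp]
    rw [sum_dotProduct' (fun i => co i • u i)]
    refine Finset.sum_congr rfl fun i _ => ?_
    rw [smul_dotProduct, smul_eq_mul, herm_dot hBH, hBu i, smul_dotProduct, smul_eq_mul]
    show co i * (μ i * co i) = _
    ring
  have hzero : ∀ i, μ i < c → co i = 0 := by
    intro i hic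
    set e : Fin n → ℝ := N⁻¹ *ᵥ u i with he
    have hue : N *ᵥ e = u i := hcancel1 _
    have henz : e ≠ 0 := by
      intro h
      have : u i = 0 := by rw [← hue, h, mulVec_zero]
      have hbnz := (hBH.eigenvectorBasis).orthonormal.ne_zero i
      exact hbnz (by
        simpa [hu] using this)
    have heev : Abar *ᵥ e = μ i • M *ᵥ e := by
      rw [he, hNBNw, hBu i, ← hNN, ← mulVec_mulVec, hcancel1, mulVec_smul]
    have hmem : e ∈ Ebar Abar M c :=
      Submodule.subset_span ⟨henz, μ i, hμpos i, hic, heev⟩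
    have h0 := hv e hmem
    rw [he, hNBNw, hBu i, mulVec_smul, dotProduct_smul, smul_eq_mul, hworth] at h0
    rcases mul_eq_zero.1 h0 with h | h
    · exact absurd h (hμpos i).ne'
    · show u i ⬝ᵥ w = 0
      rw [dotProduct_comm]; exact h
  rw [hMv, hAv, Finset.mul_sum]
  refine Finset.sum_le_sum fun i _ => ?_
  rcases lt_or_ge (μ i) c with h | h
  · rw [hzero i h]; ring_nf; exact le_refl 0
  · have hsq : 0 ≤ co i * co i := mul_self_nonneg _
    exact mul_le_mul_of_nonneg_right h hsq

lemma transpose_dual {n m : ℕ} (W : Matrix (Fin n) (Fin m) ℝ) (c : Fin m → ℝ)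
    (x : Fin n → ℝ) : (W *ᵥ c) ⬝ᵥ x = c ⬝ᵥ (Wᵀ *ᵥ x) := by
  rw [dotProduct_comm, dotProduct_mulVec, ← mulVec_transpose, dotProduct_comm]

/-- The correction operator
`Z(σ,t) = W⊥ (W⊥ᵀ (A(σ) - tM) W⊥)⁻¹ W⊥ᵀ (A(σ) - Ā)`. -/
noncomputable def Zop {n m : ℕ} (Abar M : Matrix (Fin n) (Fin n) ℝ)
    (Wperp : Matrix (Fin n) (Fin m) ℝ) (Aσ : Matrix (Fin n) (Fin n) ℝ) (t : ℝ) :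
    Matrix (Fin n) (Fin n) ℝ :=
  Wperp * (Wperpᵀ * (Aσ - t • M) * Wperp)⁻¹ * Wperpᵀ * (Aσ - Abar)

/-- if `(r, η)` solves the saddle-point system
`K(σ,t) r + Ā W η = δA(σ) b`, `Wᵀ Ā r = 0`, where `K(σ,t) = A(σ) - tM` and the
columns of `W` form a basis of `Ē`, then `r = Z(σ,t) b`. -/
theorem stmt_9 {n m p d : ℕ} (S : Set (Fin d → ℝ)) (M Abar : Matrix (Fin n) (Fin n) ℝ)
    (hM : M.PosDef) (hAbar : Abar.PosDef)
    (A : (Fin d → ℝ) → Matrix (Fin n) (Fin n) ℝ) (hApd : ∀ σ ∈ S, (A σ).PosDef)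
    (α β Λ ρ : ℝ) (hα : 0 < α) (hαβ : α ≤ β) (hΛ : 0 < Λ) (hρ : 1 < ρ) (hαρ : 1 < α * ρ)
    (hspec : ∀ σ ∈ S, ∀ v : Fin n → ℝ,
      α * (v ⬝ᵥ Abar.mulVec v) ≤ v ⬝ᵥ (A σ).mulVec v ∧
        v ⬝ᵥ (A σ).mulVec v ≤ β * (v ⬝ᵥ Abar.mulVec v))
    -- `W⊥`: columns form a basis of `Ē⊥`
    (Wperp : Matrix (Fin n) (Fin m) ℝ)
    (hWpmem : ∀ j, ∀ w ∈ Ebar Abar M (ρ * Λ), (fun i => Wperp i j) ⬝ᵥ Abar.mulVec w = 0)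
    (hWpspan : ∀ v : Fin n → ℝ,
      (∀ w ∈ Ebar Abar M (ρ * Λ), v ⬝ᵥ Abar.mulVec w = 0) → ∃ c, v = Wperp.mulVec c)
    (hWpli : ∀ c : Fin m → ℝ, Wperp.mulVec c = 0 → c = 0)
    -- `W`: columns form a basis of `Ē`
    (W : Matrix (Fin n) (Fin p) ℝ)
    (hWmem : ∀ j, (fun i => W i j) ∈ Ebar Abar M (ρ * Λ))
    (hWspan : ∀ v ∈ Ebar Abar M (ρ * Λ), ∃ c, v = W.mulVec c)
    (hWli : ∀ c : Fin p → ℝ, W.mulVec c = 0 → c = 0)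
    (σ : Fin d → ℝ) (hσ : σ ∈ S) (t : ℝ) (ht : t ∈ Set.Ioo 0 Λ)
    (b r : Fin n → ℝ) (η : Fin p → ℝ)
    (hsaddle1 : (A σ - t • M).mulVec r + Abar.mulVec (W.mulVec η) =
      (A σ - Abar).mulVec b)
    (hsaddle2 : Wᵀ.mulVec (Abar.mulVec r) = 0) :
    r = (Zop Abar M Wperp (A σ) t).mulVec b := by
  classical
  set K : Matrix (Fin n) (Fin n) ℝ := A σ - t • M with hK
  have hKH : K.IsHermitian := by
    refine (hApd σ hσ).1.sub ?_
    show (t • M)ᴴ = t • M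
    rw [conjTranspose_smul, hM.1.eq, star_trivial]
  -- r is Abar-orthogonal to Ebar
  have hrperp : ∀ w ∈ Ebar Abar M (ρ * Λ), r ⬝ᵥ Abar *ᵥ w = 0 := by
    intro w hw
    obtain ⟨e, rfl⟩ := hWspan w hw
    rw [herm_dot hAbar.1, dotProduct_comm, transpose_dual, hsaddle2, dotProduct_zero]
  obtain ⟨cr, hcr⟩ := hWpspan r hrperp
  -- Wperpᵀ kills Abar-images of Ebar
  have hWpAbar : ∀ w ∈ Ebar Abar M (ρ * Λ), Wperpᵀ *ᵥ (Abar *ᵥ w) = 0 := by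
    intro w hw
    funext j
    exact hWpmem j w hw
  -- vectors in range of Wperp are in Ebar-perp
  have hWpv : ∀ (cc : Fin m → ℝ), ∀ w ∈ Ebar Abar M (ρ * Λ),
      (Wperp *ᵥ cc) ⬝ᵥ Abar *ᵥ w = 0 := by
    intro cc w hw
    rw [transpose_dual, hWpAbar w hw, dotProduct_zero]
  -- Kp is positive definite
  set Kp : Matrix (Fin m) (Fin m) ℝ := Wperpᵀ * K * Wperp with hKp
  have hKpH : Kp.IsHermitian := by
    rw [hKp, ← conjTranspose_eq_transpose_of_trivial]
    exact isHermitian_conjTranspose_mul_mul Wperp hKH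
  have hKppd : Kp.PosDef := by
    refine Matrix.PosDef.of_dotProduct_mulVec_pos hKpH fun cc hcc => ?_
    set z : Fin n → ℝ := Wperp *ᵥ cc with hz
    have hznz : z ≠ 0 := fun h => hcc (hWpli cc h)
    have hdot : star cc ⬝ᵥ Kp *ᵥ cc = z ⬝ᵥ K *ᵥ z := by
      rw [star_trivial, hKp, ← mulVec_mulVec, ← mulVec_mulVec, ← transpose_dual]
    rw [hdot]
    have hKz : z ⬝ᵥ K *ᵥ z = z ⬝ᵥ (A σ) *ᵥ z - t * (z ⬝ᵥ M *ᵥ z) := by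
      rw [hK, sub_mulVec, dotProduct_sub, smul_mulVec, dotProduct_smul, smul_eq_mul]
    have hMz : 0 < z ⬝ᵥ M *ᵥ z := by
      have := hM.dotProduct_mulVec_pos hznz; rwa [star_trivial] at this
    have hkey := key_spectral M Abar hM hAbar (ρ * Λ) z (hWpv cc)
    have hAz := (hspec σ hσ z).1
    rw [hKz]
    nlinarith [ht.1, ht.2, mul_pos hΛ hMz]
  have hKpunit : IsUnit Kp.det := (Matrix.isUnit_iff_isUnit_det Kp).1 hKppd.isUnit
  -- project the saddle equation
  have hWη : W *ᵥ η ∈ Ebar Abar M (ρ * Λ) := by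
    have hrepr : W *ᵥ η = ∑ j, η j • (fun i => W i j) := by
      funext i
      simp [Matrix.mulVec, dotProduct, Finset.sum_apply, mul_comm]
    rw [hrepr]
    exact Submodule.sum_mem _ fun j _ => Submodule.smul_mem _ _ (hWmem j)
  have hproj := congrArg (fun x => Wperpᵀ *ᵥ x) hsaddle1
  simp only [Matrix.mulVec_add] at hproj
  rw [hWpAbar _ hWη, add_zero] at hproj
  -- hproj : Wperpᵀ *ᵥ (K *ᵥ r) = Wperpᵀ *ᵥ ((A σ - Abar) *ᵥ b)
  have hKpcr : Kp *ᵥ cr = Wperpᵀ *ᵥ ((A σ - Abar) *ᵥ b) := by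
    rw [hKp, ← mulVec_mulVec, ← mulVec_mulVec, ← hcr]
    exact hproj
  have hcr' : cr = Kp⁻¹ *ᵥ (Wperpᵀ *ᵥ ((A σ - Abar) *ᵥ b)) := by
    rw [← hKpcr, mulVec_mulVec, nonsing_inv_mul Kp hKpunit, one_mulVec]
  rw [hcr, hcr']
  show Wperp *ᵥ (Kp⁻¹ *ᵥ (Wperpᵀ *ᵥ ((A σ - Abar) *ᵥ b))) =
    (Wperp * Kp⁻¹ * Wperpᵀ * (A σ - Abar)) *ᵥ b
  rw [← mulVec_mulVec, ← mulVec_mulVec, ← mulVec_mulVec]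
end

section
/- Assume A : S → ℝ^{n×n} is spectrally equivalent to Ā with constants 0 < α ≤ β, ρ > 1 and αρ > 1. Let σ ∈ S, t ∈ (0, Λ), and let (ξ_k, u_k), k = 1, …, m, be eigenpairs of the pencil (A_⊥(σ), M_⊥), i.e. A_⊥(σ) u_k = ξ_k M_⊥ u_k, with (u_k) M_⊥-orthonormal (u_jᵀ M_⊥ u_k = δ_{jk}). Then ξ_k ≥ αρΛ > Λ for all k, and for every y ∈ Ē, Z(σ, t) y = W_⊥ ( Σ_{k=1}^m (ξ_k − t)⁻¹ u_k u_kᵀ ) W_⊥ᵀ A(σ) y. -/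
open Matrix

section Helpers

lemma dot_symm {n : ℕ} {B : Matrix (Fin n) (Fin n) ℝ} (hB : Bᵀ = B) (x y : Fin n → ℝ) :
    x ⬝ᵥ B *ᵥ y = (B *ᵥ x) ⬝ᵥ y := by
  rw [dotProduct_mulVec, ← hB, vecMul_transpose, hB]

lemma my_vecMulVec_mul {l m n : ℕ} (a : Fin l → ℝ) (b : Fin m → ℝ)
    (P : Matrix (Fin m) (Fin n) ℝ) :
    vecMulVec a b * P = vecMulVec a (b ᵥ* P) := by
  ext i j
  simp [Matrix.mul_apply, vecMulVec_apply, vecMul, dotProduct, Finset.mul_sum, mul_assoc]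

lemma my_vecMulVec_smul {l m : ℕ} (a : Fin l → ℝ) (c : ℝ) (b : Fin m → ℝ) :
    vecMulVec a (c • b) = c • vecMulVec a b := by
  ext i j
  simp [vecMulVec_apply, smul_eq_mul]
  ring

open scoped MatrixOrder in
lemma key_quad {n : ℕ} {M Abar : Matrix (Fin n) (Fin n) ℝ} (hM : M.PosDef) (hAbar : Abar.PosDef)
    {c : ℝ} (v : Fin n → ℝ)
    (hv : ∀ w : Fin n → ℝ, w ≠ 0 → ∀ ξ : ℝ, 0 < ξ → ξ < c →
      Abar *ᵥ w = ξ • M *ᵥ w → v ⬝ᵥ Abar *ᵥ w = 0) :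
    c * (v ⬝ᵥ M *ᵥ v) ≤ v ⬝ᵥ Abar *ᵥ v := by
  classical
  set S := CFC.sqrt M with hSdef
  have hSS : S * S = M := CFC.sqrt_mul_sqrt_self M hM.posSemidef.nonneg
  have hSsym : Sᵀ = S := by
    have := (CFC.sqrt_nonneg M).posSemidef.isHermitian
    rwa [IsHermitian, conjTranspose_eq_transpose_of_trivial] at this
  have hSdet : IsUnit S.det := by
    have h2 : S.det * S.det = M.det := by rw [← det_mul, hSS]
    refine isUnit_iff_ne_zero.mpr fun h => ?_
    rw [h, mul_zero] at h2
    exact hM.det_pos.ne' h2.symm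
  have hS1 : S * S⁻¹ = 1 := Matrix.mul_nonsing_inv _ hSdet
  have hS2 : S⁻¹ * S = 1 := Matrix.nonsing_inv_mul _ hSdet
  have hSisym : (S⁻¹)ᵀ = S⁻¹ := by rw [Matrix.transpose_nonsing_inv, hSsym]
  set C : Matrix (Fin n) (Fin n) ℝ := S⁻¹ * Abar * S⁻¹ with hCdef
  have hSCS : S * C * S = Abar := by
    rw [hCdef]
    calc S * (S⁻¹ * Abar * S⁻¹) * S = (S * S⁻¹) * Abar * (S⁻¹ * S) := by
          simp only [Matrix.mul_assoc]
      _ = Abar := by rw [hS1, hS2, Matrix.one_mul, Matrix.mul_one]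
  have hSinj : ∀ x : Fin n → ℝ, S⁻¹ *ᵥ x = 0 → x = 0 := by
    intro x hx
    have : S *ᵥ (S⁻¹ *ᵥ x) = x := by rw [mulVec_mulVec, hS1, one_mulVec]
    rw [hx, mulVec_zero] at this
    exact this.symm
  have hC : C.PosDef := by
    rw [posDef_iff_dotProduct_mulVec]
    constructor
    · have hAsym : Abarᵀ = Abar := by
        have := hAbar.isHermitian
        rwa [IsHermitian, conjTranspose_eq_transpose_of_trivial] at this
      rw [IsHermitian, conjTranspose_eq_transpose_of_trivial, hCdef, transpose_mul, transpose_mul,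
        hSisym, hAsym, Matrix.mul_assoc]
    · intro x hx
      have hx' : S⁻¹ *ᵥ x ≠ 0 := fun h => hx (hSinj x h)
      have : star x ⬝ᵥ C *ᵥ x = (S⁻¹ *ᵥ x) ⬝ᵥ Abar *ᵥ (S⁻¹ *ᵥ x) := by
        rw [star_trivial, hCdef, ← mulVec_mulVec, ← mulVec_mulVec, dot_symm hSisym]
      rw [this]
      have := hAbar.dotProduct_mulVec_pos hx'
      rwa [star_trivial] at this
  set hH := hC.isHermitian with hHdef
  set μ := hH.eigenvalues with hμdef
  set U : Matrix (Fin n) (Fin n) ℝ := (hH.eigenvectorUnitary : Matrix (Fin n) (Fin n) ℝ) with hUdef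
  have hUU : Uᵀ * U = 1 := by
    have := (Matrix.mem_unitaryGroup_iff').mp hH.eigenvectorUnitary.2
    rwa [star_eq_conjTranspose, conjTranspose_eq_transpose_of_trivial] at this
  have hUUT : U * Uᵀ = 1 := by
    have := (Matrix.mem_unitaryGroup_iff).mp hH.eigenvectorUnitary.2
    rwa [star_eq_conjTranspose, conjTranspose_eq_transpose_of_trivial] at this
  have hCU : ∀ i, C *ᵥ (fun j => U j i) = μ i • (fun j => U j i) := by
    intro i
    have := hH.mulVec_eigenvectorBasis i
    exact this
  set z : Fin n → ℝ := S *ᵥ v with hzdef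
  set q : Fin n → ℝ := Uᵀ *ᵥ z with hqdef
  have hqi : ∀ i, q i = (fun j => U j i) ⬝ᵥ z := by
    intro i; simp [hqdef, mulVec, dotProduct, transpose_apply]
  have hspec : C = U * diagonal μ * Uᵀ := by
    have := hH.spectral_theorem
    rwa [Unitary.conjStarAlgAut_apply, star_eq_conjTranspose, conjTranspose_eq_transpose_of_trivial,
      show (RCLike.ofReal ∘ μ : Fin n → ℝ) = μ from funext fun i => rfl] at this
  have hq0 : ∀ i, μ i < c → q i = 0 := by
    intro i hlt
    have hμpos : 0 < μ i := hC.eigenvalues_pos i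
    set ui : Fin n → ℝ := fun j => U j i with huidef
    have hui : ui ≠ 0 := by
      intro h
      have hnz := hH.eigenvectorBasis.orthonormal.ne_zero i
      apply hnz
      ext j
      exact congrFun h j
    set w : Fin n → ℝ := S⁻¹ *ᵥ ui with hwdef
    have hw : w ≠ 0 := fun h => hui (hSinj ui h)
    have hMw : M *ᵥ w = S *ᵥ ui := by
      rw [hwdef, ← hSS, ← mulVec_mulVec, mulVec_mulVec (M := S) (N := S⁻¹), hS1, one_mulVec]
    have hAw : Abar *ᵥ w = μ i • (S *ᵥ ui) := by
      rw [hwdef, ← hSCS]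
      rw [← mulVec_mulVec, ← mulVec_mulVec, mulVec_mulVec (M := S) (N := S⁻¹), hS1, one_mulVec,
        hCU i, mulVec_smul]
    have h0 := hv w hw (μ i) hμpos hlt (by rw [hAw, hMw])
    rw [hAw, dotProduct_smul, smul_eq_mul] at h0
    have h1 : v ⬝ᵥ S *ᵥ ui = 0 := by
      rcases mul_eq_zero.mp h0 with h | h
      · exact absurd h hμpos.ne'
      · exact h
    rw [dot_symm hSsym] at h1
    rw [hqi i, dotProduct_comm]
    exact h1
  have hzq : z ᵥ* U = q := by rw [hqdef, mulVec_transpose]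
  have hAv : v ⬝ᵥ Abar *ᵥ v = ∑ i, μ i * q i ^ 2 := by
    have h1 : v ⬝ᵥ Abar *ᵥ v = z ⬝ᵥ C *ᵥ z := by
      have hCz : C *ᵥ z = S⁻¹ *ᵥ (Abar *ᵥ v) := by
        rw [hzdef, hCdef, ← mulVec_mulVec, ← mulVec_mulVec,
          mulVec_mulVec (M := S⁻¹) (N := S), hS2, one_mulVec]
      rw [hCz, dot_symm hSisym, hzdef, mulVec_mulVec, hS2, one_mulVec]
    have h2 : z ⬝ᵥ C *ᵥ z = q ⬝ᵥ diagonal μ *ᵥ q := by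
      rw [hspec, ← mulVec_mulVec, ← mulVec_mulVec, dotProduct_mulVec, hzq, ← hqdef]
    rw [h1, h2]
    simp only [dotProduct, mulVec_diagonal]
    exact Finset.sum_congr rfl fun i _ => by ring
  have hMv : v ⬝ᵥ M *ᵥ v = ∑ i, q i ^ 2 := by
    have h1 : v ⬝ᵥ M *ᵥ v = z ⬝ᵥ z := by
      rw [← hSS, ← mulVec_mulVec, dot_symm hSsym, hzdef]
    have hz2 : U *ᵥ q = z := by rw [hqdef, mulVec_mulVec, hUUT, one_mulVec]
    have h2 : z ⬝ᵥ z = q ⬝ᵥ q := by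
      calc z ⬝ᵥ z = z ⬝ᵥ (U *ᵥ q) := by rw [hz2]
        _ = (z ᵥ* U) ⬝ᵥ q := by rw [dotProduct_mulVec]
        _ = q ⬝ᵥ q := by rw [hzq]
    rw [h1, h2]
    simp only [dotProduct]
    exact Finset.sum_congr rfl fun i _ => by ring
  rw [hAv, hMv, Finset.mul_sum]
  refine Finset.sum_le_sum fun i _ => ?_
  rcases le_or_gt c (μ i) with h | h
  · exact mul_le_mul_of_nonneg_right h (sq_nonneg _)
  · rw [hq0 i h]; simp

end Helpers

/-- if `(ξ_k, u_k)` are `M⊥`-orthonormal eigenpairs of the pencil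
`(A⊥(σ), M⊥)`, then `ξ_k ≥ αρΛ > Λ` for all `k`, and for every `y ∈ Ē`,
`Z(σ,t) y = W⊥ (Σ_k (ξ_k - t)⁻¹ u_k u_kᵀ) W⊥ᵀ A(σ) y`. -/
theorem stmt_15 {n m d : ℕ} (S : Set (Fin d → ℝ)) (M Abar : Matrix (Fin n) (Fin n) ℝ)
    (hM : M.PosDef) (hAbar : Abar.PosDef)
    (A : (Fin d → ℝ) → Matrix (Fin n) (Fin n) ℝ) (hApd : ∀ σ ∈ S, (A σ).PosDef)
    (α β Λ ρ : ℝ) (hα : 0 < α) (hαβ : α ≤ β) (hΛ : 0 < Λ) (hρ : 1 < ρ) (hαρ : 1 < α * ρ)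
    (hspec : ∀ σ ∈ S, ∀ v : Fin n → ℝ,
      α * (v ⬝ᵥ Abar.mulVec v) ≤ v ⬝ᵥ (A σ).mulVec v ∧
        v ⬝ᵥ (A σ).mulVec v ≤ β * (v ⬝ᵥ Abar.mulVec v))
    (Wperp : Matrix (Fin n) (Fin m) ℝ)
    (hWmem : ∀ j, ∀ w ∈ Ebar Abar M (ρ * Λ), (fun i => Wperp i j) ⬝ᵥ Abar.mulVec w = 0)
    (hWspan : ∀ v : Fin n → ℝ,
      (∀ w ∈ Ebar Abar M (ρ * Λ), v ⬝ᵥ Abar.mulVec w = 0) → ∃ c, v = Wperp.mulVec c)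
    (hWli : ∀ c : Fin m → ℝ, Wperp.mulVec c = 0 → c = 0)
    (σ : Fin d → ℝ) (hσ : σ ∈ S) (t : ℝ) (ht : t ∈ Set.Ioo 0 Λ)
    (ξ : Fin m → ℝ) (u : Fin m → (Fin m → ℝ))
    (heig : ∀ k, (Wperpᵀ * A σ * Wperp).mulVec (u k) =
      ξ k • (Wperpᵀ * M * Wperp).mulVec (u k))
    (horth : ∀ j k, u j ⬝ᵥ (Wperpᵀ * M * Wperp).mulVec (u k) =
      if j = k then (1 : ℝ) else 0) :
    (∀ k, α * ρ * Λ ≤ ξ k) ∧ Λ < α * ρ * Λ ∧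
      ∀ y ∈ Ebar Abar M (ρ * Λ),
        (Zop Abar M Wperp (A σ) t).mulVec y =
          Wperp.mulVec ((∑ k, (ξ k - t)⁻¹ • vecMulVec (u k) (u k)).mulVec
            (Wperpᵀ.mulVec ((A σ).mulVec y))) := by
  classical
  obtain ⟨ht0, htΛ⟩ := ht
  have hconj : ∀ (B : Matrix (Fin n) (Fin n) ℝ) (x y : Fin m → ℝ),
      x ⬝ᵥ (Wperpᵀ * B * Wperp) *ᵥ y = (Wperp *ᵥ x) ⬝ᵥ B *ᵥ (Wperp *ᵥ y) := by
    intro B x y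
    rw [← mulVec_mulVec, ← mulVec_mulVec, dotProduct_mulVec, vecMul_transpose]
  have hAσsym : (A σ)ᵀ = A σ := by
    have := (hApd σ hσ).isHermitian
    rwa [IsHermitian, conjTranspose_eq_transpose_of_trivial] at this
  have hMsym : Mᵀ = M := by
    have := hM.isHermitian
    rwa [IsHermitian, conjTranspose_eq_transpose_of_trivial] at this
  have hMpersym : (Wperpᵀ * M * Wperp)ᵀ = Wperpᵀ * M * Wperp := by
    rw [transpose_mul, transpose_mul, transpose_transpose, hMsym, Matrix.mul_assoc]
  -- Part 1
  have part1 : ∀ k, α * ρ * Λ ≤ ξ k := by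
    intro k
    set v : Fin n → ℝ := Wperp *ᵥ u k with hvdef
    have h1 : u k ⬝ᵥ (Wperpᵀ * A σ * Wperp) *ᵥ u k = ξ k := by
      rw [heig k, dotProduct_smul, smul_eq_mul, horth k k]
      simp
    have hMv1 : v ⬝ᵥ M *ᵥ v = 1 := by
      rw [← hconj M]
      have := horth k k
      simpa using this
    have hvorth : ∀ w : Fin n → ℝ, w ≠ 0 → ∀ ζ : ℝ, 0 < ζ → ζ < ρ * Λ →
        Abar *ᵥ w = ζ • M *ᵥ w → v ⬝ᵥ Abar *ᵥ w = 0 := by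
      intro w hw ζ hζ1 hζ2 hζ3
      have hwE : w ∈ Ebar Abar M (ρ * Λ) := Submodule.subset_span ⟨hw, ζ, hζ1, hζ2, hζ3⟩
      have hcol : Wperpᵀ *ᵥ (Abar *ᵥ w) = 0 := by
        ext j
        exact hWmem j w hwE
      have h := dotProduct_mulVec (u k) Wperpᵀ (Abar *ᵥ w)
      rw [vecMul_transpose] at h
      rw [← hvdef] at h
      rw [← h, hcol, dotProduct_zero]
    have hkey := key_quad hM hAbar v hvorth
    rw [hMv1, mul_one] at hkey
    have h2 : α * (v ⬝ᵥ Abar *ᵥ v) ≤ v ⬝ᵥ (A σ) *ᵥ v := (hspec σ hσ v).1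
    have h3 : ξ k = v ⬝ᵥ (A σ) *ᵥ v := by rw [← h1, hconj]
    have h4 : α * (ρ * Λ) ≤ α * (v ⬝ᵥ Abar *ᵥ v) := mul_le_mul_of_nonneg_left hkey hα.le
    calc α * ρ * Λ = α * (ρ * Λ) := by ring
      _ ≤ α * (v ⬝ᵥ Abar *ᵥ v) := h4
      _ ≤ v ⬝ᵥ (A σ) *ᵥ v := h2
      _ = ξ k := h3.symm
  have part2 : Λ < α * ρ * Λ := by nlinarith
  refine ⟨part1, part2, ?_⟩
  -- Part 3
  intro y hy
  have hξt : ∀ k, ξ k - t ≠ 0 := by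
    intro k
    have h : t < ξ k := by
      have := part1 k
      linarith
    exact sub_ne_zero.mpr h.ne'
  set N : Matrix (Fin m) (Fin m) ℝ := ∑ k, (ξ k - t)⁻¹ • vecMulVec (u k) (u k) with hN
  have hPsplit : Wperpᵀ * (A σ - t • M) * Wperp =
      Wperpᵀ * A σ * Wperp - t • (Wperpᵀ * M * Wperp) := by
    rw [Matrix.mul_sub, Matrix.sub_mul, Matrix.mul_smul, Matrix.smul_mul]
  have hPsym : (Wperpᵀ * (A σ - t • M) * Wperp)ᵀ = Wperpᵀ * (A σ - t • M) * Wperp := by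
    rw [hPsplit, transpose_sub, transpose_smul, hMpersym]
    rw [transpose_mul, transpose_mul, transpose_transpose, hAσsym]
    simp only [Matrix.mul_assoc]
  have hPu : ∀ k, (Wperpᵀ * (A σ - t • M) * Wperp) *ᵥ u k =
      (ξ k - t) • ((Wperpᵀ * M * Wperp) *ᵥ u k) := by
    intro k
    rw [hPsplit, sub_mulVec, heig k, smul_mulVec, sub_smul]
  -- completeness of the eigenbasis
  set Umat : Matrix (Fin m) (Fin m) ℝ := Matrix.of (fun i k => u k i) with hUmat
  have hUMU : Umatᵀ * (Wperpᵀ * M * Wperp) * Umat = 1 := by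
    ext j k
    rw [Matrix.mul_assoc, Matrix.mul_apply]
    have h := horth j k
    simp only [mulVec, dotProduct, Matrix.mul_apply, Matrix.one_apply, hUmat, Matrix.of_apply,
      transpose_apply] at h ⊢
    exact h
  have hcomm : Umat * (Umatᵀ * (Wperpᵀ * M * Wperp)) = 1 := mul_eq_one_comm.mp hUMU
  have hGM : (∑ k, vecMulVec (u k) (u k)) * (Wperpᵀ * M * Wperp) = 1 := by
    have hG : ∑ k, vecMulVec (u k) (u k) = Umat * Umatᵀ := by
      ext i j
      simp [vecMulVec_apply, Matrix.mul_apply, Matrix.sum_apply, hUmat]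
    rw [hG, Matrix.mul_assoc, hcomm]
  have hNP : N * (Wperpᵀ * (A σ - t • M) * Wperp) = 1 := by
    rw [hN, Finset.sum_mul]
    have h1 : ∀ k ∈ Finset.univ, ((ξ k - t)⁻¹ • vecMulVec (u k) (u k)) *
        (Wperpᵀ * (A σ - t • M) * Wperp) = vecMulVec (u k) (u k) * (Wperpᵀ * M * Wperp) := by
      intro k _
      rw [Matrix.smul_mul, my_vecMulVec_mul, ← mulVec_transpose, hPsym, hPu k,
        my_vecMulVec_smul, smul_smul, inv_mul_cancel₀ (hξt k), one_smul,
        my_vecMulVec_mul, ← mulVec_transpose, hMpersym]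
    rw [Finset.sum_congr rfl h1, ← Finset.sum_mul, hGM]
  have hPinv : (Wperpᵀ * (A σ - t • M) * Wperp)⁻¹ = N := Matrix.inv_eq_left_inv hNP
  have hzero : Wperpᵀ *ᵥ (Abar *ᵥ y) = 0 := by
    ext j
    exact hWmem j y hy
  show (Zop Abar M Wperp (A σ) t) *ᵥ y = Wperp *ᵥ (N *ᵥ (Wperpᵀ *ᵥ ((A σ) *ᵥ y)))
  rw [Zop, hPinv]
  rw [← mulVec_mulVec, ← mulVec_mulVec, ← mulVec_mulVec, sub_mulVec, mulVec_sub, hzero,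
    sub_zero]
end
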